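/- Let X, Y be strings over an alphabet Σ, let 0 ≤ c̄ < c ≤ |X|, W = X[c̄..c), and let g be an integer with 0 < g ≤ |W| that is a period of the whole string X. Let ā ≥ 0 and s ≥ 1 be integers with ā + (s−1)g + |W| ≤ |Y| such that Y[ā+ig..ā+ig+|W|) = W for every i ∈ [0..s). Set a = ā + (s−1)g + |W|, v̄ = max{d : d ≤ ā and Y[ā−d..ā) = Y[ā+g−d..ā+g)}, and v = max{d : a + d ≤ |Y| and Y[a..a+d) = Y[a−g..a−g+d)}. Then for every i ∈ [0..s): X occurs in Y at position ā − c̄ + ig (i.e., 0 ≤ ā − c̄ + ig, ā − c̄ + ig + |X| ≤ |Y|, and Y[ā−c̄+ig..ā−c̄+ig+|X|) = X) if and only if c̄ ≤ v̄ + ig and |X| − c ≤ v + (s−1−i)g. -/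
import Mathlib

namespace IPM

/-- A positive integer `g ≤ |S|` is a period of `S` if `S[t] = S[t+g]` for every
`t ∈ [0..|S|−g)`. -/
def IsPeriod {β : Type} (S : List β) (g : ℕ) : Prop :=
  0 < g ∧ g ≤ S.length ∧ ∀ t, t + g < S.length → S[t]? = S[t + g]?

/-- `W` occurs in `S` at position `p`, i.e. `S[p..p+|W|) = W`. -/
def OccursAt {β : Type} (W S : List β) (p : ℕ) : Prop :=
  p + W.length ≤ S.length ∧ (S.drop p).take W.length = W

lemma getElem?_take_drop {β : Type} (Y : List β) (m d j : ℕ) (hj : j < d) :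
    ((Y.drop m).take d)[j]? = Y[m+j]? := by
  rw [List.getElem?_take_of_lt hj, List.getElem?_drop]

lemma takeDropEqIff {β : Type} (Y : List β) (m n d : ℕ) :
    (Y.drop m).take d = (Y.drop n).take d ↔ ∀ j < d, Y[m+j]? = Y[n+j]? := by
  constructor
  · intro h j hj
    rw [← getElem?_take_drop Y m d j hj, ← getElem?_take_drop Y n d j hj, h]
  · intro h
    apply List.ext_getElem?
    intro j
    rcases lt_or_ge j d with hj | hj
    · rw [getElem?_take_drop Y m d j hj, getElem?_take_drop Y n d j hj]
      exact h j hj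
    · rw [List.getElem?_eq_none, List.getElem?_eq_none] <;>
        simp only [List.length_take, List.length_drop] <;> omega

lemma takeDropEqListIff {β : Type} (Y Z : List β) (m : ℕ) (hm : m + Z.length ≤ Y.length) :
    (Y.drop m).take Z.length = Z ↔ ∀ j < Z.length, Y[m+j]? = Z[j]? := by
  constructor
  · intro h j hj
    rw [← getElem?_take_drop Y m Z.length j hj, h]
  · intro h
    apply List.ext_getElem?
    intro j
    rcases lt_or_ge j Z.length with hj | hj
    · rw [getElem?_take_drop Y m Z.length j hj]; exact h j hj
    · rw [List.getElem?_eq_none (by simp only [List.length_take, List.length_drop]; omega),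
        List.getElem?_eq_none hj]

lemma periodIter {β : Type} (Y : List β) (g L U : ℕ)
    (H : ∀ t, L ≤ t → t + g < U → Y[t]? = Y[t+g]?) :
    ∀ k t, L ≤ t → t + k*g < U → Y[t]? = Y[t+k*g]? := by
  intro k
  induction k with
  | zero => simp
  | succ k ih =>
    intro t ht htU
    have hmul : (k+1)*g = k*g + g := by ring
    rw [hmul] at htU ⊢
    have h1 : Y[t]? = Y[t+g]? := H t ht (by omega)
    have h2 : Y[t+g]? = Y[t+g+k*g]? := ih (t+g) (by omega) (by omega)
    rw [h1, h2]; congr 1; omega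

theorem periodic_case_characterization {β : Type} (X Y : List β)
    (cb c : ℕ) (hcb : cb < c) (hc : c ≤ X.length)
    (W : List β) (hW : W = (X.drop cb).take (c - cb))
    (g : ℕ) (hg0 : 0 < g) (hgW : g ≤ W.length) (hgX : IsPeriod X g)
    (ab s : ℕ) (hs : 1 ≤ s) (hfit : ab + (s - 1) * g + W.length ≤ Y.length)
    (hoccW : ∀ i < s, OccursAt W Y (ab + i * g))
    (a : ℕ) (ha : a = ab + (s - 1) * g + W.length)
    (vb : ℕ) (hvb : IsGreatest {d : ℕ | d ≤ ab ∧
      (Y.drop (ab - d)).take d = (Y.drop (ab + g - d)).take d} vb)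
    (v : ℕ) (hv : IsGreatest {d : ℕ | a + d ≤ Y.length ∧
      (Y.drop a).take d = (Y.drop (a - g)).take d} v) :
    ∀ i < s,
      (cb ≤ ab + i * g ∧ OccursAt X Y (ab + i * g - cb)) ↔
      (cb ≤ vb + i * g ∧ X.length - c ≤ v + (s - 1 - i) * g) := by
  obtain ⟨hvbmem, hvbub⟩ := hvb
  obtain ⟨hvmem, hvub⟩ := hv
  obtain ⟨hvb1, hvbtk⟩ := hvbmem
  obtain ⟨hvlen, hvtk⟩ := hvmem
  obtain ⟨-, hgXlen, hXper⟩ := hgX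
  have hWlen : W.length = c - cb := by
    subst hW; rw [List.length_take, List.length_drop]; omega
  have hWget : ∀ k < c - cb, W[k]? = X[cb+k]? := by
    intro k hk
    rw [hW]; exact getElem?_take_drop X cb (c-cb) k hk
  have hXiter : ∀ k t, t + k*g < X.length → X[t]? = X[t+k*g]? :=
    fun k t h => periodIter X g 0 X.length (fun t _ ht => hXper t ht) k t (Nat.zero_le t) h
  have hoccpt : ∀ i < s, ∀ k < W.length, Y[ab + i*g + k]? = X[cb+k]? := by
    intro i hi k hk
    have h1 := (takeDropEqListIff Y W (ab+i*g) (hoccW i hi).1).mp (hoccW i hi).2 k hk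
    rw [h1, hWget k (by omega)]
  -- covering of the periodic block by occurrences of W
  have cover : ∀ t, t < a → ab ≤ t → ∃ i0 k, i0 < s ∧ k < W.length ∧ t = ab + i0*g + k := by
    intro t
    induction t using Nat.strong_induction_on with
    | _ t ih =>
      intro hta htab
      rcases lt_or_ge t (ab + W.length) with h1 | h1
      · exact ⟨0, t - ab, by omega, by omega, by omega⟩
      · obtain ⟨i0, k, hi0, hk, ht⟩ := ih (t - g) (by omega) (by omega) (by omega)
        rcases lt_or_ge (i0+1) s with h2 | h2
        · refine ⟨i0+1, k, h2, hk, ?_⟩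
          have hmul : (i0+1)*g = i0*g+g := by ring
          omega
        · refine ⟨i0, k+g, hi0, ?_, by omega⟩
          have hmul : i0*g = (s-1)*g := by congr 1; omega
          omega
  -- pointwise versions of vb and v extensions
  have hvbpt : ∀ j < vb, Y[ab - vb + j]? = Y[ab + g - vb + j]? :=
    (takeDropEqIff Y (ab - vb) (ab + g - vb) vb).mp hvbtk
  have hvpt : ∀ j < v, Y[a + j]? = Y[a - g + j]? :=
    (takeDropEqIff Y a (a - g) v).mp hvtk
  -- Y is g-periodic on [ab - vb, a + v)
  have hYper : ∀ t, ab - vb ≤ t → t + g < a + v → Y[t]? = Y[t+g]? := by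
    intro t htL htU
    rcases lt_or_ge t ab with h1 | h1
    · have hj : t - (ab - vb) < vb := by omega
      have h := hvbpt (t - (ab - vb)) hj
      rw [show ab - vb + (t - (ab - vb)) = t from by omega,
        show ab + g - vb + (t - (ab - vb)) = t + g from by omega] at h
      exact h
    rcases lt_or_ge (t+g) a with h2 | h2
    · obtain ⟨i0, k, hi0, hk, ht⟩ := cover t (by omega) h1
      rcases lt_or_ge (k+g) W.length with h3 | h3
      · have e1 : Y[t]? = X[cb+k]? := by rw [ht]; exact hoccpt i0 hi0 k hk
        have e2 : Y[t+g]? = X[cb+(k+g)]? := by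
          rw [show t + g = ab + i0*g + (k+g) from by omega]
          exact hoccpt i0 hi0 (k+g) h3
        have e3 : X[cb+k]? = X[cb+k+g]? := hXper (cb+k) (by omega)
        rw [e1, e2, e3]; congr 1; omega
      · have hi1 : i0 + 1 < s := by
          have h4 : i0*g < (s-1)*g := by omega
          by_contra hcon
          have h5 : (s-1)*g ≤ i0*g := Nat.mul_le_mul_right g (by omega)
          omega
        have e1 : Y[t]? = X[cb+k]? := by rw [ht]; exact hoccpt i0 hi0 k hk
        have e2 : Y[t+g]? = X[cb+k]? := by
          have hmul : (i0+1)*g = i0*g+g := by ring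
          rw [show t + g = ab + (i0+1)*g + k from by omega]
          exact hoccpt (i0+1) hi1 k hk
        rw [e1, e2]
    · have hj : t + g - a < v := by omega
      have h := hvpt (t+g-a) hj
      rw [show a + (t+g-a) = t+g from by omega,
        show a - g + (t+g-a) = t from by omega] at h
      exact h.symm
  have hYiter := periodIter Y g (ab - vb) (a + v) hYper
  intro i hi
  have higle : i*g ≤ (s-1)*g := Nat.mul_le_mul_right g (by omega)
  have hsplit : (s-1-i)*g + i*g = (s-1)*g := by
    rw [← Nat.add_mul]; congr 1; omega
  constructor
  · -- occurrence → inequalities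
    rintro ⟨hcb2, holen, hotk⟩
    have hopt : ∀ j < X.length, Y[ab + i*g - cb + j]? = X[j]? :=
      (takeDropEqListIff Y X _ holen).mp hotk
    constructor
    · by_contra hcon
      push_neg at hcon
      have hd : vb + 1 ≤ ab := by omega
      have hts : (Y.drop (ab - (vb+1))).take (vb+1) = (Y.drop (ab + g - (vb+1))).take (vb+1) := by
        rw [takeDropEqIff]
        intro j hj
        rcases Nat.eq_zero_or_pos j with hj0 | hj0
        · subst hj0
          have hjX : cb - (vb + 1 + i*g) < X.length := by omega
          have h1 := hopt _ hjX
          have h2 := hopt (cb - (vb + 1 + i*g) + g) (by omega)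
          have h3 := hXper (cb - (vb + 1 + i*g)) (by omega)
          rw [show ab - (vb+1) + 0 = ab + i*g - cb + (cb - (vb+1+i*g)) from by omega,
            show ab + g - (vb+1) + 0 = ab + i*g - cb + (cb - (vb+1+i*g) + g) from by omega,
            h1, h2, h3]
        · have h := hvbpt (j-1) (by omega)
          rw [show ab - (vb+1) + j = ab - vb + (j-1) from by omega,
            show ab + g - (vb+1) + j = ab + g - vb + (j-1) from by omega]
          exact h
      have := hvbub ⟨hd, hts⟩
      omega
    · by_contra hcon
      push_neg at hcon
      have hjX : c + v + (s-1-i)*g < X.length := by omega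
      have hpa : ab + i*g - cb + (c + v + (s-1-i)*g) = a + v := by omega
      have hlenY : a + (v+1) ≤ Y.length := by omega
      have hts : (Y.drop a).take (v+1) = (Y.drop (a - g)).take (v+1) := by
        rw [takeDropEqIff]
        intro j hj
        rcases lt_or_ge j v with hjv | hjv
        · exact hvpt j hjv
        · have hjv2 : j = v := by omega
          have h1 := hopt _ hjX
          have h2 := hopt (c + v + (s-1-i)*g - g) (by omega)
          have h3 := hXper (c + v + (s-1-i)*g - g) (by omega)
          rw [show a + j = ab + i*g - cb + (c + v + (s-1-i)*g) from by omega,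
            show a - g + j = ab + i*g - cb + (c + v + (s-1-i)*g - g) from by omega,
            h1, h2, h3, Nat.sub_add_cancel (by omega)]
      have := hvub ⟨hlenY, hts⟩
      omega
  · -- inequalities → occurrence
    rintro ⟨h1, h2⟩
    have hcb2 : cb ≤ ab + i*g := by omega
    have hplen : ab + i*g - cb + X.length ≤ a + v := by omega
    have hmid : ∀ j, cb ≤ j → j < c → Y[ab + i*g - cb + j]? = X[j]? := by
      intro j hj1 hj2
      have h := hoccpt i hi (j - cb) (by omega)
      rw [show ab + i*g - cb + j = ab + i*g + (j - cb) from by omega, h,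
        show cb + (j - cb) = j from by omega]
    refine ⟨hcb2, by omega, (takeDropEqListIff Y X _ (by omega)).mpr ?_⟩
    intro j hj
    rcases lt_or_ge j cb with hjc | hjc
    · obtain ⟨k, hk1, hk2⟩ : ∃ k, cb ≤ j + k*g ∧ j + k*g < cb + g := by
        have hdm := Nat.div_add_mod (cb - j - 1) g
        have hm2 : (cb - j - 1) % g < g := Nat.mod_lt _ hg0
        have hm3 : ((cb-j-1)/g + 1)*g = g*((cb-j-1)/g) + g := by ring
        exact ⟨(cb - j - 1)/g + 1, by omega, by omega⟩
      have hx : X[j]? = X[j + k*g]? := hXiter k j (by omega)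
      have hy : Y[ab + i*g - cb + j]? = Y[ab + i*g - cb + j + k*g]? :=
        hYiter k _ (by omega) (by omega)
      have hmid' := hmid (j + k*g) hk1 (by omega)
      rw [hy, hx, show ab + i*g - cb + j + k*g = ab + i*g - cb + (j + k*g) from by omega]
      exact hmid'
    · rcases lt_or_ge j c with hjc2 | hjc2
      · exact hmid j hjc hjc2
      · obtain ⟨k, j', hj'1, hj'2, hjj⟩ : ∃ k j', cb ≤ j' ∧ j' < c ∧ j = j' + k*g := by
          have hdm := Nat.div_add_mod (j - c) g
          have hm2 : (j - c) % g < g := Nat.mod_lt _ hg0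
          have hm3 : ((j-c)/g + 1)*g = g*((j-c)/g) + g := by ring
          exact ⟨(j-c)/g + 1, c + (j-c)%g - g, by omega, by omega, by omega⟩
        have hx : X[j']? = X[j' + k*g]? := hXiter k j' (by omega)
        have hy : Y[ab + i*g - cb + j']? = Y[ab + i*g - cb + j' + k*g]? :=
          hYiter k _ (by omega) (by omega)
        have hmid' := hmid j' hj'1 hj'2
        rw [hjj, ← add_assoc, ← hy, ← hx]
        exact hmid'

end IPM
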